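/- Fix B₁ > 0 and μ > 0 and let r₀ = √(2/μ). For z = (x, y) and z' = (x', y') with x, x' ∈ ℝ^d, ‖x‖ ≤ B₁, ‖x'‖ ≤ B₁ and y, y' ∈ {−1, +1}, define the AUC maximization loss ℓ(w, z, z') = (1 − ⟨x − x', w⟩)²·𝟙[y = 1 and y' = −1] + (μ/2)·‖w‖² for w ∈ ℝ^d. Then: (i) w ↦ ℓ(w, z, z') is μ-strongly convex on ℝ^d; (ii) w ↦ ℓ(w, z, z') is differentiable and its gradient is (8B₁² + μ)-Lipschitz on ℝ^d; and (iii) restricted to the closed ball {w : ‖w‖ ≤ r₀}, w ↦ ℓ(w, z, z') is (4B₁ + 8B₁²·√(2/μ) + √(2μ))-Lipschitz. -/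

import Mathlib

open scoped RealInnerProductSpace

/-- **Corollary 20 (AUC maximization loss properties).** The AUC maximization loss
`ℓ(w) = (1 − ⟪x − x', w⟫)²·𝟙[y = 1 ∧ y' = −1] + (μ/2)‖w‖²` is `μ`-strongly convex,
`(8B₁² + μ)`-smooth, and `(4B₁ + 8B₁²√(2/μ) + √(2μ))`-Lipschitz on the ball of radius
`r₀ = √(2/μ)`. -/
theorem auc_loss_properties
    {d : ℕ} (B₁ μ : ℝ) (hB₁ : 0 < B₁) (hμ : 0 < μ)
    (x x' : EuclideanSpace ℝ (Fin d)) (y y' : ℝ)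
    (hx : ‖x‖ ≤ B₁) (hx' : ‖x'‖ ≤ B₁)
    (hy : y = 1 ∨ y = -1) (hy' : y' = 1 ∨ y' = -1)
    (ℓ : EuclideanSpace ℝ (Fin d) → ℝ)
    (hℓ : ∀ w, ℓ w =
      (1 - ⟪x - x', w⟫) ^ 2 * (if y = 1 ∧ y' = -1 then 1 else 0) + μ / 2 * ‖w‖ ^ 2) :
    ConvexOn ℝ Set.univ (fun w => ℓ w - μ / 2 * ‖w‖ ^ 2) ∧
      (∃ g : EuclideanSpace ℝ (Fin d) → EuclideanSpace ℝ (Fin d),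
        (∀ w, HasGradientAt ℓ (g w) w) ∧
          ∀ w v, ‖g w - g v‖ ≤ (8 * B₁ ^ 2 + μ) * ‖w - v‖) ∧
      ∀ w ∈ Metric.closedBall (0 : EuclideanSpace ℝ (Fin d)) (Real.sqrt (2 / μ)),
        ∀ v ∈ Metric.closedBall (0 : EuclideanSpace ℝ (Fin d)) (Real.sqrt (2 / μ)),
          |ℓ w - ℓ v| ≤
            (4 * B₁ + 8 * B₁ ^ 2 * Real.sqrt (2 / μ) + Real.sqrt (2 * μ)) * ‖w - v‖ := by
  set a : EuclideanSpace ℝ (Fin d) := x - x' with ha_def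
  set c : ℝ := if y = 1 ∧ y' = -1 then 1 else 0 with hc_def
  have hc01 : c = 0 ∨ c = 1 := by
    by_cases h : y = 1 ∧ y' = -1 <;> simp [hc_def, h]
  have hc0 : (0:ℝ) ≤ c := by rcases hc01 with h | h <;> rw [h] <;> norm_num
  have hc1 : c ≤ 1 := by rcases hc01 with h | h <;> rw [h] <;> norm_num
  have ha : ‖a‖ ≤ 2 * B₁ := by
    calc ‖a‖ ≤ ‖x‖ + ‖x'‖ := norm_sub_le x x'
    _ ≤ 2 * B₁ := by linarith
  have hℓ' : ℓ = fun w => c * (1 - ⟪a, w⟫) ^ 2 + μ / 2 * ‖w‖ ^ 2 := by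
    funext w; rw [hℓ w]; ring
  subst hℓ'
  set r₀ : ℝ := Real.sqrt (2 / μ) with hr_def
  have hr0 : 0 ≤ r₀ := Real.sqrt_nonneg _
  have hμr : μ * r₀ = Real.sqrt (2 * μ) := by
    rw [hr_def, show (2:ℝ) * μ = (2 / μ) * μ ^ 2 by field_simp,
      Real.sqrt_mul (by positivity), Real.sqrt_sq hμ.le]
    ring
  refine ⟨?_, ?_, ?_⟩
  · -- convexity
    have heq : (fun w : EuclideanSpace ℝ (Fin d) =>
        (c * (1 - ⟪a, w⟫) ^ 2 + μ / 2 * ‖w‖ ^ 2) - μ / 2 * ‖w‖ ^ 2)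
        = fun w => c • ((1 - ⟪a, w⟫) ^ 2) := by
      funext w; simp [smul_eq_mul]
    rw [heq]
    refine ConvexOn.smul hc0 ?_
    have hA : ∀ p' : EuclideanSpace ℝ (Fin d),
        (1 - ⟪a, p'⟫) = (-(innerSL ℝ a : EuclideanSpace ℝ (Fin d) →L[ℝ] ℝ)).toLinearMap
          (p' -ᵥ (0 : EuclideanSpace ℝ (Fin d))) +ᵥ (1 - ⟪a, (0 : EuclideanSpace ℝ (Fin d))⟫) := by
      intro p'; simp [vadd_eq_add]; ring
    set A : EuclideanSpace ℝ (Fin d) →ᵃ[ℝ] ℝ :=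
      AffineMap.mk' (fun w => 1 - ⟪a, w⟫)
        (-(innerSL ℝ a : EuclideanSpace ℝ (Fin d) →L[ℝ] ℝ)).toLinearMap 0 hA with hA_def
    have := (Even.convexOn_pow (even_two)).comp_affineMap A
    simpa [hA_def, Function.comp_def] using this
  · -- smoothness
    refine ⟨fun w => (2 * c * (⟪a, w⟫ - 1)) • a + μ • w, fun w => ?_, fun w v => ?_⟩
    · have h1 : HasFDerivAt (fun w : EuclideanSpace ℝ (Fin d) => 1 - ⟪a, w⟫)
          (-(innerSL ℝ a)) w := (innerSL ℝ a).hasFDerivAt.const_sub 1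
      have h2 := (h1.mul h1).const_mul c
      have h4 := (hasStrictFDerivAt_norm_sq w).hasFDerivAt.const_mul (μ/2)
      have h6 := h2.add h4
      rw [hasGradientAt_iff_hasFDerivAt]
      have heq : (fun w : EuclideanSpace ℝ (Fin d) =>
          c * ((1 - ⟪a, w⟫) * (1 - ⟪a, w⟫)) + μ / 2 * ‖w‖ ^ 2)
          = fun w => c * (1 - ⟪a, w⟫) ^ 2 + μ / 2 * ‖w‖ ^ 2 := by
        funext u; ring
      rw [← heq]
      refine HasFDerivAt.congr_fderiv h6 ?_
      ext v
      simp [inner_add_left, inner_smul_left, real_inner_comm]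
      ring
    · have key : ((2 * c * (⟪a, w⟫ - 1)) • a + μ • w) - ((2 * c * (⟪a, v⟫ - 1)) • a + μ • v)
          = (2 * c * ⟪a, w - v⟫) • a + μ • (w - v) := by
        rw [inner_sub_right]
        module
      rw [key]
      have hin : |⟪a, w - v⟫| ≤ ‖a‖ * ‖w - v‖ := abs_real_inner_le_norm a (w - v)
      have h1 : ‖(2 * c * ⟪a, w - v⟫) • a + μ • (w - v)‖
          ≤ ‖(2 * c * ⟪a, w - v⟫) • a‖ + ‖μ • (w - v)‖ := norm_add_le _ _
      rw [norm_smul, norm_smul] at h1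
      simp only [Real.norm_eq_abs] at h1
      have h2 : |2 * c * ⟪a, w - v⟫| ≤ 2 * (‖a‖ * ‖w - v‖) := by
        rw [abs_mul, abs_mul, abs_of_nonneg hc0, abs_two]
        have hc' : c * |⟪a, w - v⟫| ≤ 1 * |⟪a, w - v⟫| :=
          mul_le_mul_of_nonneg_right hc1 (abs_nonneg _)
        calc 2 * c * |⟪a, w - v⟫| = 2 * (c * |⟪a, w - v⟫|) := by ring
        _ ≤ 2 * (1 * |⟪a, w - v⟫|) := by linarith
        _ = 2 * |⟪a, w - v⟫| := by ring
        _ ≤ 2 * (‖a‖ * ‖w - v‖) := by linarith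
      have hna : 0 ≤ ‖a‖ := norm_nonneg _
      have hnwv : 0 ≤ ‖w - v‖ := norm_nonneg _
      have haa : ‖a‖ * ‖a‖ ≤ 4 * B₁ ^ 2 := by
        have := mul_le_mul ha ha hna (by positivity : (0:ℝ) ≤ 2 * B₁)
        calc ‖a‖ * ‖a‖ ≤ 2 * B₁ * (2 * B₁) := this
        _ = 4 * B₁ ^ 2 := by ring
      have h3 : |2 * c * ⟪a, w - v⟫| * ‖a‖ ≤ 8 * B₁ ^ 2 * ‖w - v‖ := by
        calc |2 * c * ⟪a, w - v⟫| * ‖a‖ ≤ (2 * (‖a‖ * ‖w - v‖)) * ‖a‖ :=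
              mul_le_mul_of_nonneg_right h2 hna
        _ = 2 * (‖a‖ * ‖a‖) * ‖w - v‖ := by ring
        _ ≤ 2 * (4 * B₁ ^ 2) * ‖w - v‖ :=
              mul_le_mul_of_nonneg_right (by linarith) hnwv
        _ = 8 * B₁ ^ 2 * ‖w - v‖ := by ring
      rw [abs_of_pos hμ] at h1
      linarith
  · -- Lipschitz on the ball
    intro w hw v hv
    rw [Metric.mem_closedBall, dist_zero_right] at hw hv
    show |(c * (1 - ⟪a, w⟫) ^ 2 + μ / 2 * ‖w‖ ^ 2) - (c * (1 - ⟪a, v⟫) ^ 2 + μ / 2 * ‖v‖ ^ 2)|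
        ≤ (4 * B₁ + 8 * B₁ ^ 2 * r₀ + Real.sqrt (2 * μ)) * ‖w - v‖
    set s := ⟪a, w⟫ with hs_def
    set t := ⟪a, v⟫ with ht_def
    have hst : s - t = ⟪a, w - v⟫ := by rw [hs_def, ht_def, inner_sub_right]
    have hstle : |s - t| ≤ ‖a‖ * ‖w - v‖ := by
      rw [hst]; exact abs_real_inner_le_norm a (w - v)
    have hsle : |s| ≤ ‖a‖ * r₀ := by
      refine (abs_real_inner_le_norm a w).trans ?_
      exact mul_le_mul_of_nonneg_left hw (norm_nonneg a)
    have htle : |t| ≤ ‖a‖ * r₀ := by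
      refine (abs_real_inner_le_norm a v).trans ?_
      exact mul_le_mul_of_nonneg_left hv (norm_nonneg a)
    have hnn : |‖w‖ - ‖v‖| ≤ ‖w - v‖ := abs_norm_sub_norm_le w v
    have hnw : 0 ≤ ‖w‖ := norm_nonneg _
    have hnv : 0 ≤ ‖v‖ := norm_nonneg _
    have hnwv : 0 ≤ ‖w - v‖ := norm_nonneg _
    have hna : 0 ≤ ‖a‖ := norm_nonneg _
    have habs1 : |c * (1 - s) ^ 2 - c * (1 - t) ^ 2|
        ≤ (4 * B₁ + 8 * B₁ ^ 2 * r₀) * ‖w - v‖ := by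
      have hfac : c * (1 - s) ^ 2 - c * (1 - t) ^ 2 = c * ((t - s) * (2 - s - t)) := by ring
      rw [hfac, abs_mul, abs_mul]
      have h2st : |2 - s - t| ≤ 2 + 2 * (‖a‖ * r₀) := by
        have := abs_sub_abs_le_abs_sub s t
        calc |2 - s - t| ≤ |2| + |(-s)| + |(-t)| := by
              calc |2 - s - t| = |2 + (-s) + (-t)| := by ring_nf
              _ ≤ |2 + (-s)| + |(-t)| := abs_add_le _ _
              _ ≤ |2| + |(-s)| + |(-t)| := by linarith [abs_add_le (2:ℝ) (-s)]
        _ ≤ 2 + 2 * (‖a‖ * r₀) := by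
              rw [abs_neg, abs_neg]; norm_num; linarith
      have hts : |t - s| ≤ ‖a‖ * ‖w - v‖ := by rw [abs_sub_comm]; exact hstle
      have hcle : |c| ≤ 1 := by rcases hc01 with h | h <;> simp [h]
      have h0 : 0 ≤ |t - s| := abs_nonneg _
      have h00 : 0 ≤ |2 - s - t| := abs_nonneg _
      calc |c| * (|t - s| * |2 - s - t|) ≤ 1 * (|t - s| * |2 - s - t|) := by
            apply mul_le_mul_of_nonneg_right hcle; positivity
      _ = |t - s| * |2 - s - t| := by ring
      _ ≤ (‖a‖ * ‖w - v‖) * (2 + 2 * (‖a‖ * r₀)) := by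
            apply mul_le_mul hts h2st h00; positivity
      _ ≤ (2 * B₁ * ‖w - v‖) * (2 + 2 * (‖a‖ * r₀)) := by
            apply mul_le_mul_of_nonneg_right _ (by positivity)
            exact mul_le_mul_of_nonneg_right ha hnwv
      _ ≤ (2 * B₁ * ‖w - v‖) * (2 + 2 * (2 * B₁ * r₀)) := by
            apply mul_le_mul_of_nonneg_left _ (by positivity)
            have : ‖a‖ * r₀ ≤ 2 * B₁ * r₀ := mul_le_mul_of_nonneg_right ha hr0
            linarith
      _ = (4 * B₁ + 8 * B₁ ^ 2 * r₀) * ‖w - v‖ := by ring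
    have habs2 : |μ / 2 * ‖w‖ ^ 2 - μ / 2 * ‖v‖ ^ 2| ≤ Real.sqrt (2 * μ) * ‖w - v‖ := by
      rw [← hμr]
      have hfac : μ / 2 * ‖w‖ ^ 2 - μ / 2 * ‖v‖ ^ 2
          = μ / 2 * ((‖w‖ - ‖v‖) * (‖w‖ + ‖v‖)) := by ring
      rw [hfac, abs_mul, abs_mul, abs_of_pos (by positivity : (0:ℝ) < μ / 2),
        abs_of_nonneg (by positivity : (0:ℝ) ≤ ‖w‖ + ‖v‖)]
      have : |‖w‖ - ‖v‖| * (‖w‖ + ‖v‖) ≤ ‖w - v‖ * (2 * r₀) := by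
        apply mul_le_mul hnn (by linarith) (by positivity) hnwv
      calc μ / 2 * (|‖w‖ - ‖v‖| * (‖w‖ + ‖v‖)) ≤ μ / 2 * (‖w - v‖ * (2 * r₀)) := by
            apply mul_le_mul_of_nonneg_left this (by positivity)
      _ = μ * r₀ * ‖w - v‖ := by ring
    calc |(c * (1 - s) ^ 2 + μ / 2 * ‖w‖ ^ 2) - (c * (1 - t) ^ 2 + μ / 2 * ‖v‖ ^ 2)|
        ≤ |c * (1 - s) ^ 2 - c * (1 - t) ^ 2| + |μ / 2 * ‖w‖ ^ 2 - μ / 2 * ‖v‖ ^ 2| := by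
          have : (c * (1 - s) ^ 2 + μ / 2 * ‖w‖ ^ 2) - (c * (1 - t) ^ 2 + μ / 2 * ‖v‖ ^ 2)
              = (c * (1 - s) ^ 2 - c * (1 - t) ^ 2) + (μ / 2 * ‖w‖ ^ 2 - μ / 2 * ‖v‖ ^ 2) := by
            ring
          rw [this]; exact abs_add_le _ _
    _ ≤ (4 * B₁ + 8 * B₁ ^ 2 * r₀) * ‖w - v‖ + Real.sqrt (2 * μ) * ‖w - v‖ := by
          linarith
    _ = (4 * B₁ + 8 * B₁ ^ 2 * r₀ + Real.sqrt (2 * μ)) * ‖w - v‖ := by ring
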